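/- Let n ≥ 1 be an integer, q > n and σ > 0. Let f(x) = (1+|x|²)^{−q/2}, which belongs to L¹(ℝⁿ), and let 𝓕f(ξ) = (2π)^{−n/2} ∫_{ℝⁿ} e^{−i x·ξ} f(x) dx denote its Fourier transform. Then the function ξ ↦ |ξ|^{2σ} 𝓕f(ξ) is integrable on ℝⁿ and (2π)^{−n/2} ∫_{ℝⁿ} |ξ|^{2σ} 𝓕f(ξ) dξ = 2^{2σ} · Γ(σ + n/2)/Γ(n/2) · Γ(σ + q/2)/Γ(q/2), where Γ denotes the Gamma function. In particular this quantity, which equals the value of the fractional Laplacian (−Δ)^σ ⟨·⟩^{−q} at the origin, is strictly positive. -/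

import Mathlib

open MeasureTheory

/-- The Fourier transform `𝓕f(ξ) = (2π)^{-n/2} ∫ e^{-i x·ξ} f(x) dx` of `f : ℝⁿ → ℝ`. -/
noncomputable def fourierTransf {n : ℕ} (f : EuclideanSpace ℝ (Fin n) → ℝ)
    (ξ : EuclideanSpace ℝ (Fin n)) : ℂ :=
  ((2 * Real.pi) ^ (-(n : ℝ) / 2) : ℝ) •
    ∫ x : EuclideanSpace ℝ (Fin n),
      Complex.exp (-Complex.I * ((inner ℝ x ξ : ℝ) : ℂ)) * ((f x : ℝ) : ℂ)

open Real Set Filter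

lemma pt_bound {p a s : ℝ} (hp : 0 ≤ p) (ha : 0 < a) (hs : 0 ≤ s) :
    s ^ p * Real.exp (-(a * s ^ 2)) ≤ Real.exp (p ^ 2 / (2 * a)) * Real.exp (-(a / 2 * s ^ 2)) := by
  have h1 : s ^ p ≤ Real.exp (p * s) := by
    calc s ^ p ≤ (Real.exp s) ^ p :=
          Real.rpow_le_rpow hs (by linarith [Real.add_one_le_exp s]) hp
    _ = Real.exp (p * s) := by rw [← Real.exp_mul, mul_comm]
  calc s ^ p * Real.exp (-(a * s ^ 2)) ≤ Real.exp (p * s) * Real.exp (-(a * s ^ 2)) := by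
        exact mul_le_mul_of_nonneg_right h1 (Real.exp_pos _).le
  _ = Real.exp (p * s - a * s ^ 2) := by rw [← Real.exp_add]; ring_nf
  _ ≤ Real.exp (p ^ 2 / (2 * a) + -(a / 2 * s ^ 2)) := by
        apply Real.exp_le_exp.2
        rw [← sub_nonneg]
        have h2 : p ^ 2 / (2 * a) + -(a / 2 * s ^ 2) - (p * s - a * s ^ 2) =
            (p - a * s) ^ 2 / (2 * a) := by field_simp; ring
        rw [h2]; positivity
  _ = _ := Real.exp_add _ _

lemma gauss_int {n : ℕ} {b : ℝ} (hb : 0 < b) :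
    Integrable (fun x : EuclideanSpace ℝ (Fin n) => Real.exp (-(b * ‖x‖ ^ 2))) := by
  have := (GaussianFourier.integrable_cexp_neg_mul_sq_norm_add
    (V := EuclideanSpace ℝ (Fin n)) (b := (b : ℂ)) (by simpa using hb) 0 0).norm
  refine this.congr (Eventually.of_forall fun x => ?_)
  simp only [Complex.norm_exp, zero_mul, add_zero]
  rw [← Complex.ofReal_pow, ← Complex.ofReal_neg, ← Complex.ofReal_mul, Complex.ofReal_re]
  congr 1; ring

lemma integrable_moment {n : ℕ} {p a : ℝ} (hp : 0 ≤ p) (ha : 0 < a) :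
    Integrable (fun x : EuclideanSpace ℝ (Fin n) => ‖x‖ ^ p * Real.exp (-(a * ‖x‖ ^ 2))) := by
  refine ((gauss_int (n := n) (b := a / 2) (by positivity)).const_mul
      (Real.exp (p ^ 2 / (2 * a)))).mono' ?_ (Eventually.of_forall fun x => ?_)
  · apply Measurable.aestronglyMeasurable
    fun_prop
  · rw [Real.norm_eq_abs, abs_of_nonneg (by positivity)]
    exact pt_bound hp ha (norm_nonneg x)

lemma integral_moment {n : ℕ} (hn : 1 ≤ n) {p a : ℝ} (hp : 0 ≤ p) (ha : 0 < a) :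
    ∫ x : EuclideanSpace ℝ (Fin n), ‖x‖ ^ p * Real.exp (-(a * ‖x‖ ^ 2))
      = Real.pi ^ ((n : ℝ) / 2) * (Real.Gamma ((p + n) / 2) / Real.Gamma ((n : ℝ) / 2))
          * a ^ (-((p + n) / 2)) := by
  haveI : Nonempty (Fin n) := Fin.pos_iff_nonempty.mp hn
  haveI : Nontrivial (EuclideanSpace ℝ (Fin n)) := inferInstance
  have hn' : (1 : ℝ) ≤ n := by exact_mod_cast hn
  have key := MeasureTheory.integral_fun_norm_addHaar
    (E := EuclideanSpace ℝ (Fin n)) volume (fun r => r ^ p * Real.exp (-(a * r ^ 2)))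
  rw [finrank_euclideanSpace, Fintype.card_fin] at key
  rw [key]
  have hrad : ∫ y in Ioi (0 : ℝ), y ^ (n - 1) • (y ^ p * Real.exp (-(a * y ^ 2)))
      = a ^ (-((p + n) / 2)) * (1 / 2) * Real.Gamma ((p + n) / 2) := by
    have h1 : ∀ y ∈ Ioi (0 : ℝ), y ^ (n - 1) • (y ^ p * Real.exp (-(a * y ^ 2)))
        = y ^ (p + n - 1) * Real.exp (-a * y ^ (2 : ℝ)) := by
      intro y hy
      have hy' : (0 : ℝ) < y := hy
      rw [smul_eq_mul, show ((2:ℝ)) = ((2:ℕ):ℝ) from by norm_num, Real.rpow_natCast, ← Real.rpow_natCast y (n - 1), ← mul_assoc, ← Real.rpow_add hy', neg_mul]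
      congr 2
      rw [Nat.cast_sub hn]; push_cast; ring
    rw [setIntegral_congr_fun measurableSet_Ioi h1,
      integral_rpow_mul_exp_neg_mul_rpow zero_lt_two (by linarith) ha,
      show p + (n : ℝ) - 1 + 1 = p + n by ring,
      show -(p + (n : ℝ)) / 2 = -((p + n) / 2) by ring]
  rw [hrad, measureReal_def, EuclideanSpace.volume_ball, Fintype.card_fin]
  rw [ENNReal.ofReal_one, one_pow, one_mul,
    ENNReal.toReal_ofReal (by positivity)]
  have hΓ : Real.Gamma ((n : ℝ) / 2 + 1) = ((n : ℝ) / 2) * Real.Gamma ((n : ℝ) / 2) :=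
    Real.Gamma_add_one (by positivity)
  have hsq : (Real.sqrt Real.pi) ^ n = Real.pi ^ ((n : ℝ) / 2) := by
    rw [Real.sqrt_eq_rpow, ← Real.rpow_natCast (Real.pi ^ ((1:ℝ)/2)) n,
      ← Real.rpow_mul Real.pi_nonneg]
    norm_num [div_eq_mul_inv, mul_comm]
  rw [nsmul_eq_mul, smul_eq_mul, hsq, hΓ]
  have hΓpos : 0 < Real.Gamma ((n : ℝ) / 2) := Real.Gamma_pos_of_pos (by positivity)
  have hnpos : (0:ℝ) < n := by exact_mod_cast hn'.trans_lt' zero_lt_one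
  field_simp

lemma c1d {s : ℝ} (hs : -1 < s) : IntegrableOn (fun t : ℝ => t ^ s * Real.exp (-t)) (Ioi 0) := by
  have := Real.GammaIntegral_convergent (s := s + 1) (by linarith)
  simpa [mul_comm] using this

lemma cintegral_ofReal {α : Type*} [MeasurableSpace α] {μ : Measure α} (f : α → ℝ) :
    ∫ x, ((f x : ℝ) : ℂ) ∂μ = ((∫ x, f x ∂μ : ℝ) : ℂ) := integral_ofReal

lemma fourier_pointwise {n : ℕ} {q : ℝ} (hq : (n : ℝ) < q) (ξ : EuclideanSpace ℝ (Fin n)) :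
    ∫ x : EuclideanSpace ℝ (Fin n),
        Complex.exp (-Complex.I * ((inner ℝ x ξ : ℝ) : ℂ)) * (((1 + ‖x‖ ^ 2) ^ (-q / 2) : ℝ) : ℂ)
      = (((Real.Gamma (q / 2))⁻¹ * ∫ t in Set.Ioi (0:ℝ),
          t ^ (q / 2 - 1) * Real.exp (-t) *
            ((Real.pi / t) ^ ((n : ℝ) / 2) * Real.exp (-(‖ξ‖ ^ 2 / (4 * t)))) : ℝ) : ℂ) := by
  have hq0 : 0 < q := lt_of_le_of_lt (Nat.cast_nonneg n) hq
  have hq2 : 0 < q / 2 := by positivity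
  have hΓ : 0 < Real.Gamma (q / 2) := Real.Gamma_pos_of_pos hq2
  set g : ℝ × EuclideanSpace ℝ (Fin n) → ℂ := fun p =>
    ((p.1 ^ (q/2 - 1) : ℝ) : ℂ) * (((Real.exp (-p.1) : ℝ) : ℂ) *
      Complex.exp (-(p.1 : ℂ) * (‖p.2‖ : ℂ) ^ 2 + (-Complex.I) * ((inner ℝ ξ p.2 : ℝ) : ℂ)))
    with hg_def
  -- measurability
  have hmeas : Measurable g := by
    have m1 : Measurable fun p : ℝ × EuclideanSpace ℝ (Fin n) => ((p.1 ^ (q/2-1) : ℝ) : ℂ) :=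
      Complex.measurable_ofReal.comp (by fun_prop)
    have c2 : Continuous fun p : ℝ × EuclideanSpace ℝ (Fin n) =>
        (((Real.exp (-p.1) : ℝ)) : ℂ) *
          Complex.exp (-(p.1 : ℂ) * (‖p.2‖ : ℂ) ^ 2 + (-Complex.I) * ((inner ℝ ξ p.2 : ℝ) : ℂ)) := by
      apply Continuous.mul
      · exact Complex.continuous_ofReal.comp (Real.continuous_exp.comp continuous_fst.neg)
      · apply Complex.continuous_exp.comp
        exact ((Complex.continuous_ofReal.comp continuous_fst).neg.mul
            ((Complex.continuous_ofReal.comp (continuous_norm.comp continuous_snd)).pow 2)).add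
          (continuous_const.mul (Complex.continuous_ofReal.comp
            (continuous_const.inner continuous_snd)))
    exact m1.mul c2.measurable
  -- norm of g for t > 0
  have hnorm : ∀ t : ℝ, 0 < t → ∀ x : EuclideanSpace ℝ (Fin n),
      ‖g (t, x)‖ = t ^ (q/2-1) * Real.exp (-t) * Real.exp (-t * ‖x‖^2) := by
    intro t ht x
    rw [hg_def]
    have hre : (-(t:ℂ) * ((‖x‖:ℂ)) ^ 2 + -Complex.I * ((inner ℝ ξ x : ℝ) : ℂ)).re
        = -t * ‖x‖ ^ 2 := by
      simp [Complex.add_re, Complex.mul_re]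
      left; norm_cast
    simp only [norm_mul, Complex.norm_real, Real.norm_eq_abs, Complex.norm_exp, hre]
    rw [abs_of_nonneg (Real.rpow_nonneg ht.le _), abs_of_nonneg (Real.exp_pos _).le, mul_assoc]
  -- integrability of g on the product
  have hInt : Integrable g ((volume.restrict (Ioi 0)).prod volume) := by
    rw [integrable_prod_iff hmeas.aestronglyMeasurable]
    constructor
    · filter_upwards [ae_restrict_mem measurableSet_Ioi] with t ht
      have h := GaussianFourier.integrable_cexp_neg_mul_sq_norm_add
        (V := EuclideanSpace ℝ (Fin n)) (b := (t:ℂ)) (by simpa using ht) (-Complex.I) ξ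
      simp only [hg_def]
      exact (h.const_mul _).const_mul _
    · have hI : IntegrableOn
          (fun t : ℝ => Real.pi ^ ((n:ℝ)/2) * (t ^ (q/2 - 1 - (n:ℝ)/2) * Real.exp (-t)))
          (Ioi 0) := by
        refine (c1d ?_).const_mul _
        have : (0:ℝ) ≤ n := Nat.cast_nonneg n
        linarith
      refine hI.congr ?_
      filter_upwards [ae_restrict_mem measurableSet_Ioi] with t ht
      simp only [hnorm t ht]
      rw [integral_const_mul,
        GaussianFourier.integral_rexp_neg_mul_sq_norm (V := EuclideanSpace ℝ (Fin n)) ht,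
        finrank_euclideanSpace, Fintype.card_fin,
        Real.div_rpow Real.pi_nonneg ht.le, Real.rpow_sub ht]
      field_simp
  -- pointwise subordination
  have hsub : ∀ x : EuclideanSpace ℝ (Fin n),
      Complex.exp (-Complex.I * ((inner ℝ x ξ : ℝ) : ℂ)) * (((1 + ‖x‖ ^ 2) ^ (-q / 2) : ℝ) : ℂ)
        = ((Real.Gamma (q/2) : ℝ) : ℂ)⁻¹ * ∫ t in Ioi (0:ℝ), g (t, x) := by
    intro x
    have hr : (0:ℝ) < 1 + ‖x‖ ^ 2 := by positivity
    have h1 : ∀ t ∈ Ioi (0:ℝ), g (t, x)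
        = Complex.exp (-Complex.I * ((inner ℝ x ξ : ℝ) : ℂ)) *
            ((t ^ (q/2-1) * Real.exp (-((1 + ‖x‖^2) * t)) : ℝ) : ℂ) := by
      intro t ht
      simp only [hg_def]
      rw [real_inner_comm ξ x]
      have hL : ((t ^ (q/2 - 1) : ℝ) : ℂ) * (((Real.exp (-t) : ℝ) : ℂ) *
          Complex.exp (-(t : ℂ) * (‖x‖ : ℂ) ^ 2 + (-Complex.I) * ((inner ℝ ξ x : ℝ) : ℂ)))
          = ((t ^ (q/2 - 1) : ℝ) : ℂ) * Complex.exp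
              (((-t : ℝ) : ℂ) + (-(t : ℂ) * (‖x‖ : ℂ) ^ 2 + (-Complex.I) * ((inner ℝ ξ x : ℝ) : ℂ))) := by
        rw [Complex.ofReal_exp, ← Complex.exp_add]
      have hR : Complex.exp (-Complex.I * ((inner ℝ ξ x : ℝ) : ℂ)) *
          ((t ^ (q/2-1) * Real.exp (-((1 + ‖x‖^2) * t)) : ℝ) : ℂ)
          = ((t ^ (q/2 - 1) : ℝ) : ℂ) * Complex.exp
              (((-((1 + ‖x‖^2) * t) : ℝ) : ℂ) + (-Complex.I * ((inner ℝ ξ x : ℝ) : ℂ))) := by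
        rw [Complex.ofReal_mul, Complex.ofReal_exp, mul_comm, mul_assoc, ← Complex.exp_add]
      rw [hL, hR]
      congr 2
      push_cast
      ring
    rw [setIntegral_congr_fun measurableSet_Ioi h1, integral_const_mul, cintegral_ofReal,
      integral_rpow_mul_exp_neg_mul_Ioi hq2 hr]
    rw [show ((1 + ‖x‖^2 : ℝ))^(-q/2)
        = (1/(1 + ‖x‖^2))^(q/2) * Real.Gamma (q/2) * (Real.Gamma (q/2))⁻¹ from by
      rw [mul_assoc, mul_inv_cancel₀ hΓ.ne', mul_one, one_div, ← Real.rpow_neg_one,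
        ← Real.rpow_mul hr.le]
      congr 1
      ring]
    push_cast
    ring
  -- swap
  simp only [hsub]
  rw [integral_const_mul, ← integral_integral_swap hInt]
  have h2 : ∀ t ∈ Ioi (0:ℝ), (∫ x : EuclideanSpace ℝ (Fin n), g (t, x))
      = ((t ^ (q/2-1) * Real.exp (-t) *
          ((Real.pi / t)^((n:ℝ)/2) * Real.exp (-(‖ξ‖^2/(4*t)))) : ℝ) : ℂ) := by
    intro t ht
    rw [hg_def]
    simp only []
    rw [integral_const_mul, integral_const_mul,
      GaussianFourier.integral_cexp_neg_mul_sq_norm_add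
        (V := EuclideanSpace ℝ (Fin n)) (b := (t:ℂ)) (by simpa using ht) (-Complex.I) ξ,
      finrank_euclideanSpace, Fintype.card_fin]
    have ht' : (0:ℝ) < t := ht
    have e1 : (((Real.pi : ℂ)) / (t : ℂ)) ^ (((n:ℕ) : ℂ) / 2)
        = (((Real.pi / t) ^ ((n:ℝ)/2) : ℝ) : ℂ) := by
      rw [show (((n:ℕ) : ℂ) / 2) = (((n:ℝ)/2 : ℝ) : ℂ) from by push_cast; ring,
        ← Complex.ofReal_div,
        Complex.ofReal_cpow (le_of_lt (div_pos Real.pi_pos ht'))]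
    have e2 : Complex.exp ((-Complex.I)^2 * ((‖ξ‖ : ℂ))^2 / (4 * (t:ℂ)))
        = ((Real.exp (-(‖ξ‖^2/(4*t))) : ℝ) : ℂ) := by
      rw [Complex.ofReal_exp]
      congr 1
      rw [neg_sq, Complex.I_sq]
      push_cast
      field_simp
    rw [e1, e2]
    push_cast
    ring
  rw [setIntegral_congr_fun measurableSet_Ioi h2, cintegral_ofReal]
  push_cast
  ring

-- value of 1d Gamma integral
lemma g1d {s : ℝ} (hs : -1 < s) :
    ∫ t in Ioi (0:ℝ), t ^ s * Real.exp (-t) = Real.Gamma (s + 1) := by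
  rw [Real.Gamma_eq_integral (by linarith)]
  simp [mul_comm]

/-- `⟨·⟩^{-q} ∈ L¹(ℝⁿ)` for `q > n`, the function `|ξ|^{2σ} 𝓕⟨·⟩^{-q}(ξ)`
is integrable, and `(2π)^{-n/2} ∫ |ξ|^{2σ} 𝓕⟨·⟩^{-q}(ξ) dξ`, i.e. the value of
`(-Δ)^σ ⟨·⟩^{-q}` at the origin, equals
`2^{2σ} Γ(σ+n/2)/Γ(n/2) · Γ(σ+q/2)/Γ(q/2) > 0`. -/
theorem stmt6 (n : ℕ) (hn : 1 ≤ n) (q : ℝ) (hq : (n : ℝ) < q) (σ : ℝ) (hσ : 0 < σ) :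
    Integrable (fun x : EuclideanSpace ℝ (Fin n) => (1 + ‖x‖ ^ 2) ^ (-q / 2)) ∧
    Integrable (fun ξ : EuclideanSpace ℝ (Fin n) =>
      (‖ξ‖ ^ (2 * σ) : ℝ) •
        fourierTransf (fun x : EuclideanSpace ℝ (Fin n) => (1 + ‖x‖ ^ 2) ^ (-q / 2)) ξ) ∧
    ((2 * Real.pi) ^ (-(n : ℝ) / 2) : ℝ) •
        (∫ ξ : EuclideanSpace ℝ (Fin n),
          (‖ξ‖ ^ (2 * σ) : ℝ) •
            fourierTransf (fun x : EuclideanSpace ℝ (Fin n) => (1 + ‖x‖ ^ 2) ^ (-q / 2)) ξ)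
      = (((2 : ℝ) ^ (2 * σ) * (Real.Gamma (σ + n / 2) / Real.Gamma (n / 2)) *
          (Real.Gamma (σ + q / 2) / Real.Gamma (q / 2)) : ℝ) : ℂ) ∧
    0 < (2 : ℝ) ^ (2 * σ) * (Real.Gamma (σ + n / 2) / Real.Gamma (n / 2)) *
          (Real.Gamma (σ + q / 2) / Real.Gamma (q / 2)) := by
  have hn' : (1 : ℝ) ≤ n := by exact_mod_cast hn
  have hq0 : 0 < q := by linarith
  have hq2 : 0 < q / 2 := by linarith
  have hn2 : (0 : ℝ) < (n : ℝ) / 2 := by linarith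
  have hΓq : 0 < Real.Gamma (q / 2) := Real.Gamma_pos_of_pos hq2
  have hΓn : 0 < Real.Gamma ((n : ℝ) / 2) := Real.Gamma_pos_of_pos hn2
  -- Part 1
  have h1 : Integrable (fun x : EuclideanSpace ℝ (Fin n) => (1 + ‖x‖ ^ 2) ^ (-q / 2)) := by
    have := integrable_rpow_neg_one_add_norm_sq (E := EuclideanSpace ℝ (Fin n))
      (μ := volume) (r := q) (by rw [finrank_euclideanSpace, Fintype.card_fin]; exact hq)
    simpa using this
  -- Fourier transform pointwise
  have hFT : ∀ ξ : EuclideanSpace ℝ (Fin n),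
      fourierTransf (fun x : EuclideanSpace ℝ (Fin n) => (1 + ‖x‖ ^ 2) ^ (-q / 2)) ξ
        = ((((2 * Real.pi) ^ (-(n : ℝ) / 2) * ((Real.Gamma (q / 2))⁻¹ *
            ∫ t in Ioi (0:ℝ), t ^ (q / 2 - 1) * Real.exp (-t) *
              ((Real.pi / t) ^ ((n : ℝ) / 2) * Real.exp (-(‖ξ‖ ^ 2 / (4 * t)))))) : ℝ) : ℂ) := by
    intro ξ
    rw [fourierTransf, fourier_pointwise hq ξ, Complex.real_smul, ← Complex.ofReal_mul]
  -- the kernel H on the product space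
  set H : EuclideanSpace ℝ (Fin n) × ℝ → ℝ := fun p =>
    ‖p.1‖ ^ (2 * σ) * (p.2 ^ (q / 2 - 1) * Real.exp (-p.2) *
      ((Real.pi / p.2) ^ ((n : ℝ) / 2) * Real.exp (-(‖p.1‖ ^ 2 / (4 * p.2))))) with hH
  have hHmeas : Measurable H := by
    apply Measurable.mul
    · fun_prop
    · apply Measurable.mul
      · exact Measurable.mul (by fun_prop) (Real.measurable_exp.comp measurable_snd.neg)
      · apply Measurable.mul
        · fun_prop
        · exact Real.measurable_exp.comp
            (((measurable_fst.norm.pow_const 2).div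
              (measurable_const.mul measurable_snd)).neg)
  -- value of the inner (ξ) integral
  have hval : ∀ t ∈ Ioi (0:ℝ), (∫ ξ : EuclideanSpace ℝ (Fin n), H (ξ, t))
      = (Real.pi ^ ((n : ℝ) / 2) * (Real.Gamma ((2 * σ + n) / 2) / Real.Gamma ((n : ℝ) / 2)) *
          (Real.pi ^ ((n : ℝ) / 2) * 4 ^ ((2 * σ + (n : ℝ)) / 2))) *
        (t ^ (q / 2 + σ - 1) * Real.exp (-t)) := by
    intro t ht
    have ht' : (0:ℝ) < t := ht
    have hptw : ∀ ξ : EuclideanSpace ℝ (Fin n), H (ξ, t)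
        = (t ^ (q / 2 - 1) * Real.exp (-t) * (Real.pi / t) ^ ((n : ℝ) / 2)) *
            (‖ξ‖ ^ (2 * σ) * Real.exp (-(1 / (4 * t) * ‖ξ‖ ^ 2))) := by
      intro ξ
      simp only [hH]
      rw [show -(1 / (4 * t) * ‖ξ‖ ^ 2) = -(‖ξ‖ ^ 2 / (4 * t)) by ring]
      ring
    simp only [hptw]
    rw [integral_const_mul, integral_moment hn (by positivity) (show (0:ℝ) < 1 / (4 * t) by positivity)]
    have e4 : ((1 : ℝ) / (4 * t)) ^ (-((2 * σ + (n : ℝ)) / 2))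
        = 4 ^ ((2 * σ + (n : ℝ)) / 2) * t ^ ((2 * σ + (n : ℝ)) / 2) := by
      rw [one_div, Real.inv_rpow (by positivity), ← Real.rpow_neg (by positivity), neg_neg,
        Real.mul_rpow (by norm_num) ht'.le]
    have ept : (Real.pi / t) ^ ((n : ℝ) / 2) = Real.pi ^ ((n : ℝ) / 2) * t ^ (-((n : ℝ) / 2)) := by
      rw [Real.div_rpow Real.pi_nonneg ht'.le, Real.rpow_neg ht'.le, div_eq_mul_inv]
    have ets : t ^ (q / 2 + σ - 1)
        = t ^ (q / 2 - 1) * t ^ (-((n : ℝ) / 2)) * t ^ ((2 * σ + (n : ℝ)) / 2) := by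
      rw [← Real.rpow_add ht', ← Real.rpow_add ht']; congr 1; ring
    rw [e4, ept, ets]
    ring
  -- integrability of H
  have hHint : Integrable H (volume.prod (volume.restrict (Ioi (0:ℝ)))) := by
    rw [integrable_prod_iff' hHmeas.aestronglyMeasurable]
    constructor
    · filter_upwards [ae_restrict_mem measurableSet_Ioi] with t ht
      have ht' : (0:ℝ) < t := ht
      have base := (integrable_moment (n := n) (p := 2 * σ) (a := 1 / (4 * t))
          (by positivity) (by positivity)).const_mul
        (t ^ (q / 2 - 1) * Real.exp (-t) * (Real.pi / t) ^ ((n : ℝ) / 2))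
      refine base.congr (Eventually.of_forall fun ξ => ?_)
      simp only [hH]
      rw [show -(1 / (4 * t) * ‖ξ‖ ^ 2) = -(‖ξ‖ ^ 2 / (4 * t)) by ring]
      ring
    · have hInt1 : IntegrableOn (fun t : ℝ =>
          (Real.pi ^ ((n : ℝ) / 2) * (Real.Gamma ((2 * σ + n) / 2) / Real.Gamma ((n : ℝ) / 2)) *
            (Real.pi ^ ((n : ℝ) / 2) * 4 ^ ((2 * σ + (n : ℝ)) / 2))) *
          (t ^ (q / 2 + σ - 1) * Real.exp (-t))) (Ioi 0) :=
        (c1d (by linarith)).const_mul _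
      refine hInt1.congr ?_
      filter_upwards [ae_restrict_mem measurableSet_Ioi] with t ht
      have ht' : (0:ℝ) < t := ht
      have hnn : ∀ ξ : EuclideanSpace ℝ (Fin n), ‖H (ξ, t)‖ = H (ξ, t) := by
        intro ξ
        refine Real.norm_of_nonneg ?_
        simp only [hH]
        have h1' : (0:ℝ) ≤ Real.pi / t := div_nonneg Real.pi_nonneg ht'.le
        positivity
      simp only [hnn]
      exact (hval t ht).symm
  -- key pointwise identity
  have hKey : ∀ ξ : EuclideanSpace ℝ (Fin n),
      (‖ξ‖ ^ (2 * σ) : ℝ) •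
          fourierTransf (fun x : EuclideanSpace ℝ (Fin n) => (1 + ‖x‖ ^ 2) ^ (-q / 2)) ξ
        = (((((2 * Real.pi) ^ (-(n : ℝ) / 2) * (Real.Gamma (q / 2))⁻¹) *
            ∫ t in Ioi (0:ℝ), H (ξ, t)) : ℝ) : ℂ) := by
    intro ξ
    rw [hFT ξ, Complex.real_smul, ← Complex.ofReal_mul]
    congr 1
    rw [show (∫ t in Ioi (0:ℝ), H (ξ, t))
        = ‖ξ‖ ^ (2 * σ) * ∫ t in Ioi (0:ℝ), t ^ (q / 2 - 1) * Real.exp (-t) *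
            ((Real.pi / t) ^ ((n : ℝ) / 2) * Real.exp (-(‖ξ‖ ^ 2 / (4 * t)))) from by
      simp only [hH]
      exact integral_const_mul _ _]
    ring
  -- Part 2
  have h2 : Integrable (fun ξ : EuclideanSpace ℝ (Fin n) =>
      (‖ξ‖ ^ (2 * σ) : ℝ) •
        fourierTransf (fun x : EuclideanSpace ℝ (Fin n) => (1 + ‖x‖ ^ 2) ^ (-q / 2)) ξ) := by
    have hint2 : Integrable (fun ξ : EuclideanSpace ℝ (Fin n) =>
        (((2 * Real.pi) ^ (-(n : ℝ) / 2) * (Real.Gamma (q / 2))⁻¹) *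
          ∫ t in Ioi (0:ℝ), H (ξ, t))) :=
      (hHint.integral_prod_left).const_mul _
    exact (hint2.ofReal (𝕜 := ℂ)).congr (Eventually.of_forall fun ξ => (hKey ξ).symm)
  -- Part 3
  refine ⟨h1, h2, ?_, ?_⟩
  · simp only [hKey]
    rw [cintegral_ofReal, Complex.real_smul, ← Complex.ofReal_mul]
    congr 1
    rw [integral_const_mul, integral_integral_swap hHint,
      setIntegral_congr_fun measurableSet_Ioi hval, integral_const_mul, g1d (by linarith),
      show q / 2 + σ - 1 + 1 = σ + q / 2 by ring,
      show (2 * σ + (n:ℝ)) / 2 = σ + (n : ℝ) / 2 by ring]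
    -- arithmetic
    have hA1 : ((2 * Real.pi) : ℝ) ^ (-(n : ℝ) / 2) * (2 * Real.pi) ^ (-(n : ℝ) / 2)
        = (2:ℝ) ^ (-(n : ℝ)) * Real.pi ^ (-(n : ℝ)) := by
      rw [← Real.rpow_add (by positivity), show -(n:ℝ)/2 + -(n:ℝ)/2 = -(n:ℝ) by ring,
        Real.mul_rpow (by norm_num) Real.pi_nonneg]
    have hA2 : Real.pi ^ ((n : ℝ) / 2) * Real.pi ^ ((n : ℝ) / 2) = Real.pi ^ ((n : ℝ)) := by
      rw [← Real.rpow_add Real.pi_pos]; congr 1; ring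
    have hA3 : Real.pi ^ (-(n : ℝ)) * Real.pi ^ ((n : ℝ)) = 1 := by
      rw [← Real.rpow_add Real.pi_pos]; norm_num
    have hA4 : ((4:ℝ)) ^ (σ + (n : ℝ) / 2) = 2 ^ (2 * σ) * 2 ^ ((n : ℝ)) := by
      have h42 : (4:ℝ) = (2:ℝ) ^ (2:ℝ) := by
        rw [show (2:ℝ) = ((2:ℕ):ℝ) by norm_num] ; rw [Real.rpow_natCast]; norm_num
      rw [h42, ← Real.rpow_mul (by norm_num), show (2:ℝ) * (σ + (n : ℝ) / 2) = 2 * σ + n by ring,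
        Real.rpow_add (by norm_num)]
    have hA5 : (2:ℝ) ^ (-(n : ℝ)) * 2 ^ ((n : ℝ)) = 1 := by
      rw [← Real.rpow_add (by norm_num)]; norm_num
    have hARITH : ((2 * Real.pi) : ℝ) ^ (-(n : ℝ) / 2) * (2 * Real.pi) ^ (-(n : ℝ) / 2) *
        (Real.pi ^ ((n : ℝ) / 2) * Real.pi ^ ((n : ℝ) / 2)) * 4 ^ (σ + (n : ℝ) / 2)
        = 2 ^ (2 * σ) := by
      rw [hA1, hA2, hA4]
      calc (2:ℝ) ^ (-(n:ℝ)) * Real.pi ^ (-(n:ℝ)) * Real.pi ^ ((n:ℝ)) * (2 ^ (2*σ) * 2 ^ ((n:ℝ)))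
          = (Real.pi ^ (-(n:ℝ)) * Real.pi ^ ((n:ℝ))) * ((2:ℝ) ^ (-(n:ℝ)) * 2 ^ ((n:ℝ))) *
              2 ^ (2*σ) := by ring
        _ = 2 ^ (2*σ) := by rw [hA3, hA5]; ring
    have hGn : Real.Gamma (σ + (n:ℝ)/2) = Real.Gamma (σ + n / 2) := by norm_num
    linear_combination ((Real.Gamma (σ + (n:ℝ)/2) / Real.Gamma ((n:ℝ)/2)) *
      Real.Gamma (σ + q/2) * (Real.Gamma (q/2))⁻¹) * hARITH
  · positivity
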